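/- Let I ⊆ ℝ be an open interval, let Γ : I → ℝ^{n+1} be differentiable with locally Lipschitz derivative and |Γ'(s)| = 1 for all s ∈ I, and set T := Γ'. Let s₀ ∈ I and let N₁⁰,…,N_n⁰ ∈ ℝ^{n+1} be such that (T(s₀),N₁⁰,…,N_n⁰) is an orthonormal basis of ℝ^{n+1}. Then there exists a unique n-tuple of locally Lipschitz maps N₁,…,N_n : I → ℝ^{n+1} such that: (i) N_j(s₀) = N_j⁰ for every j; (ii) (T(s),N₁(s),…,N_n(s)) is an orthonormal basis of ℝ^{n+1} for every s ∈ I; and (iii) for almost every s ∈ I and every j, the derivative N_j'(s) is a scalar multiple of T(s). In other words, every C^{1,1} unit-speed curve admits a unique relatively parallel adapted frame with prescribed initial normal vectors. -/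

import Mathlib

open MeasureTheory Real Set Filter

open Metric Function

open scoped Interval

noncomputable section

section Helpers

variable {E : Type*} [NormedAddCommGroup E] [NormedSpace ℝ E]

/-- Derivative bound from a Lipschitz bound on a neighborhood. -/
lemma RPF.norm_hasDerivAt_le_of_lip {f : ℝ → E} {f' : E} {x : ℝ} {s : Set ℝ} {L : NNReal}
    (hs : s ∈ nhds x) (hl : LipschitzOnWith L f s) (hf : HasDerivAt f f' x) : ‖f'‖ ≤ L := by
  have h := hf.hasFDerivAt.le_of_lipschitzOn hs hl
  have h1 : (1 : ℝ →L[ℝ] ℝ) = ContinuousLinearMap.id ℝ ℝ := rfl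
  rwa [ContinuousLinearMap.norm_toSpanSingleton] at h

/-- A Lipschitz function on a closed interval with a.e. vanishing derivative is constant. -/
lemma RPF.const_of_ae_deriv_zero {f : ℝ → ℝ} {a b : ℝ} {L : NNReal}
    (hl : LipschitzOnWith L f (Icc a b))
    (hae : ∀ᵐ x, x ∈ Ioo a b → HasDerivAt f 0 x) :
    ∀ x ∈ Icc a b, ∀ y ∈ Icc a b, f x = f y := by
  rcases le_or_gt b a with hba | hab
  · intro x hx y hy
    have : x = y := le_antisymm (hx.2.trans (hba.trans hy.1)) (hy.2.trans (hba.trans hx.1))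
    rw [this]
  set s : Set ℝ := {x | x ∈ Ioo a b ∧ HasDerivAt f 0 x} with hs_def
  have hzero : (0 : ℝ →L[ℝ] ℝ).det = 0 := by
    have h1 : ((0 : ℝ →L[ℝ] ℝ) : ℝ →ₗ[ℝ] ℝ) = (0 : ℝ) • LinearMap.id := by ext; simp
    rw [ContinuousLinearMap.det, h1, LinearMap.det_smul, LinearMap.det_id]
    simp
  have hgood : volume (f '' s) = 0 := by
    have hder : ∀ x ∈ s, HasFDerivWithinAt f ((fun _ => (0 : ℝ →L[ℝ] ℝ)) x) s x := by
      intro x hx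
      have h2 := hx.2.hasFDerivAt
      have h0 : ContinuousLinearMap.toSpanSingleton ℝ (0 : ℝ) = 0 := by ext; simp
      rw [h0] at h2
      exact h2.hasFDerivWithinAt
    set R : ℝ := max |a| |b| with hR
    have hsub : s ⊆ closedBall 0 R := by
      intro x hx
      simp only [mem_closedBall, dist_zero_right, Real.norm_eq_abs]
      have h1 : a ≤ x := hx.1.1.le
      have h2 : x ≤ b := hx.1.2.le
      have := neg_abs_le a
      have := le_abs_self b
      have := le_max_left |a| |b|
      have := le_max_right |a| |b|
      rw [abs_le]; constructor <;> linarith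
    have key : ∀ ε : NNReal, 0 < ε → volume (f '' s) ≤ ε * volume (closedBall (0:ℝ) R) :=
      fun ε hε => addHaar_image_eq_zero_of_det_fderivWithin_eq_zero_aux volume hder R hsub ε hε
        (fun x _ => hzero)
    have hfin : volume (closedBall (0:ℝ) R) ≠ ⊤ := by
      rw [Real.volume_closedBall]; exact ENNReal.ofReal_ne_top
    by_contra hne
    have hpos : 0 < volume (f '' s) := pos_iff_ne_zero.2 hne
    have hfin2 : volume (f '' s) ≠ ⊤ :=
      ne_top_of_le_ne_top (ENNReal.mul_ne_top (by simp) hfin) (key 1 one_pos)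
    obtain ⟨ε, hε0, hε⟩ := ENNReal.exists_nnreal_pos_mul_lt hfin hne
    exact absurd (key ε hε0) (not_le.2 hε)
  have hbadset : volume (Icc a b \ s) = 0 := by
    have h1 : Icc a b \ s ⊆ {a, b} ∪ {x | x ∈ Ioo a b ∧ ¬ HasDerivAt f 0 x} := by
      rintro x ⟨hx1, hx2⟩
      by_cases hio : x ∈ Ioo a b
      · exact Or.inr ⟨hio, fun hd => hx2 ⟨hio, hd⟩⟩
      · left
        rcases eq_or_lt_of_le hx1.1 with h | h
        · exact Or.inl h.symm
        · rcases eq_or_lt_of_le hx1.2 with h2 | h2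
          · exact Or.inr h2
          · exact absurd ⟨h, h2⟩ hio
    refine measure_mono_null h1 (measure_union_null ?_ ?_)
    · exact measure_union_null (measure_singleton a) (measure_singleton b)
    · rw [ae_iff] at hae
      refine measure_mono_null ?_ hae
      rintro x ⟨hx1, hx2⟩
      simp only [mem_setOf_eq]
      intro h
      exact hx2 (h hx1)
  have hbad : volume (f '' (Icc a b \ s)) = 0 := by
    have hlip2 : LipschitzOnWith L f (Icc a b \ s) := hl.mono diff_subset
    have h3 := hlip2.hausdorffMeasure_image_le (d := 1) zero_le_one
    rw [hausdorffMeasure_real] at h3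
    refine le_antisymm (h3.trans ?_) zero_le
    rw [hbadset, mul_zero]
  have himg : volume (f '' Icc a b) = 0 := by
    have hsplit : f '' Icc a b ⊆ f '' s ∪ f '' (Icc a b \ s) := by
      rintro y ⟨x, hx, hfx⟩
      by_cases hxs : x ∈ s
      · exact Or.inl ⟨x, hxs, hfx⟩
      · exact Or.inr ⟨x, ⟨hx, hxs⟩, hfx⟩
    exact measure_mono_null hsplit (measure_union_null hgood hbad)
  have hcont : ContinuousOn f (Icc a b) := hl.continuousOn
  obtain ⟨c, hc, hcmin⟩ := isCompact_Icc.exists_isMinOn (nonempty_Icc.2 hab.le) hcont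
  obtain ⟨e, he, hemax⟩ := isCompact_Icc.exists_isMaxOn (nonempty_Icc.2 hab.le) hcont
  rw [isMinOn_iff] at hcmin
  rw [isMaxOn_iff] at hemax
  have hce : f c ≤ f e := hcmin e he
  have hIcc_sub : Icc (f c) (f e) ⊆ f '' Icc a b := by
    have h1 : uIcc (f c) (f e) ⊆ f '' uIcc c e :=
      intermediate_value_uIcc (hcont.mono (uIcc_subset_Icc hc he))
    have h2 : f '' uIcc c e ⊆ f '' Icc a b := image_mono (uIcc_subset_Icc hc he)
    intro y hy
    exact h2 (h1 (by rwa [uIcc_of_le hce]))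
  have hlen : volume (Icc (f c) (f e)) = 0 := measure_mono_null hIcc_sub himg
  rw [Real.volume_Icc] at hlen
  have hfe : f e ≤ f c := by
    by_contra hlt
    push_neg at hlt
    rw [ENNReal.ofReal_eq_zero] at hlen
    linarith
  intro x hx y hy
  have h1 : f x ≤ f e := hemax x hx
  have h2 : f c ≤ f x := hcmin x hx
  have h3 : f y ≤ f e := hemax y hy
  have h4 : f c ≤ f y := hcmin y hy
  linarith

end Helpers

/-- If `F` has increments given by integrals of `f` near `x`, and `x` is a Lebesgue point
of `f`, then `F` is differentiable at `x` with derivative `f x`. -/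
lemma RPF.hasDerivAt_of_integral_increment {E : Type*} [NormedAddCommGroup E] [NormedSpace ℝ E] [CompleteSpace E]
    {f : ℝ → E} {F : ℝ → E} {x : ℝ}
    (hf : Integrable f volume)
    (hloc : ∀ᶠ y in nhds x, F y - F x = ∫ u in x..y, f u)
    (havg : Tendsto (fun r => ⨍ y in closedBall x r, ‖f y - f x‖)
      (nhdsWithin 0 (Ioi (0:ℝ))) (nhds 0)) :
    HasDerivAt F (f x) x := by
  rw [hasDerivAt_iff_isLittleO, Asymptotics.isLittleO_iff]
  intro ε hε
  have hev : ∀ᶠ r in nhdsWithin 0 (Ioi (0:ℝ)),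
      (⨍ y in closedBall x r, ‖f y - f x‖) < ε / 2 :=
    havg.eventually_lt_const (by positivity)
  obtain ⟨S, hS, hS2⟩ := eventually_iff_exists_mem.1 hev
  obtain ⟨δ, hδmem, hδsub⟩ := mem_nhdsGT_iff_exists_Ioo_subset.1 hS
  have hδ0 : (0:ℝ) < δ := hδmem
  have hball : ∀ᶠ y in nhds x, dist y x < δ := by
    filter_upwards [Metric.ball_mem_nhds x hδ0] with y hy using hy
  filter_upwards [hloc, hball] with y hy1 hy2
  rcases eq_or_ne y x with rfl | hne
  · simp
  set r := |y - x| with hr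
  have hr0 : 0 < r := abs_pos.2 (sub_ne_zero.2 hne)
  have hrδ : r < δ := by rwa [Real.dist_eq] at hy2
  have havg2 : (⨍ u in closedBall x r, ‖f u - f x‖) < ε / 2 :=
    hS2 r (hδsub ⟨hr0, hrδ⟩)
  have hint : IntegrableOn (fun u => ‖f u - f x‖) (closedBall x r) volume :=
    (hf.integrableOn.sub (integrableOn_const measure_closedBall_lt_top.ne)).norm
  have heq : ∫ u in x..y, (f u - f x) = (∫ u in x..y, f u) - (y - x) • f x := by
    rw [intervalIntegral.integral_sub hf.intervalIntegrable (intervalIntegrable_const),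
      intervalIntegral.integral_const]
  rw [hy1, ← heq]
  have hsubset : Ι x y ⊆ closedBall x r := by
    intro u hu
    rcases le_total x y with h | h
    · rw [Set.uIoc_of_le h] at hu
      rw [mem_closedBall, Real.dist_eq, abs_le, hr, abs_of_nonneg (by linarith [hu.1.le, hu.2] : (0:ℝ) ≤ y - x)]
      constructor <;> [linarith [hu.1.le, hu.2]; linarith [hu.1.le, hu.2] ]
    · rw [Set.uIoc_of_ge h] at hu
      rw [mem_closedBall, Real.dist_eq, abs_le, hr, abs_of_nonpos (by linarith : y - x ≤ 0)]
      constructor <;> [linarith [hu.1.le, hu.2]; linarith [hu.1.le, hu.2] ]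
  have key : ‖∫ u in x..y, (f u - f x)‖ ≤ ∫ u in closedBall x r, ‖f u - f x‖ := by
    refine (intervalIntegral.norm_integral_le_abs_integral_norm).trans ?_
    have habs : |∫ u in x..y, ‖f u - f x‖| = ∫ u in Ι x y, ‖f u - f x‖ := by
      rcases le_total x y with h | h
      · rw [intervalIntegral.integral_of_le h, Set.uIoc_of_le h,
          abs_of_nonneg (setIntegral_nonneg measurableSet_Ioc (fun u _ => norm_nonneg _))]
      · rw [intervalIntegral.integral_of_ge h, Set.uIoc_of_ge h, abs_neg,
          abs_of_nonneg (setIntegral_nonneg measurableSet_Ioc (fun u _ => norm_nonneg _))]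
    rw [habs]
    exact setIntegral_mono_set hint
      (Eventually.of_forall (fun u => norm_nonneg _)) (HasSubset.Subset.eventuallyLE hsubset)
  have hcb : volume (closedBall x r) ≠ ⊤ := measure_closedBall_lt_top.ne
  have havg3 : ∫ u in closedBall x r, ‖f u - f x‖
      = (volume (closedBall x r)).toReal * ⨍ u in closedBall x r, ‖f u - f x‖ := by
    rw [← smul_eq_mul]; exact (measure_smul_setAverage _ hcb).symm
  have hvol : (volume (closedBall x r)).toReal = 2 * r := by
    rw [Real.volume_closedBall, ENNReal.toReal_ofReal (by linarith)]
  calc ‖∫ u in x..y, (f u - f x)‖ ≤ ∫ u in closedBall x r, ‖f u - f x‖ := key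
    _ = 2 * r * ⨍ u in closedBall x r, ‖f u - f x‖ := by rw [havg3, hvol]
    _ ≤ 2 * r * (ε / 2) := by
        refine mul_le_mul_of_nonneg_left havg2.le (by linarith)
    _ = ε * r := by ring
    _ = ε * ‖y - x‖ := by rw [Real.norm_eq_abs]

/-- Auxiliary integral computation. -/
lemma RPF.abs_integral_abs_pow (s₀ s C : ℝ) (m : ℕ) (hC : 0 ≤ C) :
    |∫ u in s₀..s, C * |u - s₀| ^ m| = C * |s - s₀| ^ (m + 1) / (m + 1) := by
  have hm1 : (0:ℝ) < (m:ℝ) + 1 := by positivity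
  rcases le_total s₀ s with h | h
  · have hcong : EqOn (fun u => C * |u - s₀| ^ m) (fun u => C * (u - s₀) ^ m) (uIcc s₀ s) := by
      intro u hu
      rw [uIcc_of_le h] at hu
      simp only
      rw [abs_of_nonneg (by linarith [hu.1] : (0:ℝ) ≤ u - s₀)]
    rw [intervalIntegral.integral_congr hcong]
    have h2 : ∫ u in s₀..s, C * (u - s₀) ^ m = C * ((s - s₀) ^ (m+1) / (m+1)) := by
      rw [intervalIntegral.integral_const_mul]
      congr 1
      have h3 : ∫ u in s₀..s, (u - s₀) ^ m = ∫ u in s₀ - s₀..s - s₀, u ^ m :=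
        intervalIntegral.integral_comp_sub_right (fun u => u ^ m) s₀
      rw [h3, sub_self, integral_pow, zero_pow (Nat.succ_ne_zero m), sub_zero]
    have hA : (0:ℝ) ≤ (s - s₀) ^ (m + 1) := pow_nonneg (by linarith) _
    rw [h2, abs_of_nonneg (mul_nonneg hC (div_nonneg hA hm1.le))]
    rw [abs_of_nonneg (by linarith : (0:ℝ) ≤ s - s₀)]
    ring
  · have hcong : EqOn (fun u => C * |u - s₀| ^ m) (fun u => C * (s₀ - u) ^ m) (uIcc s₀ s) := by
      intro u hu
      rw [uIcc_of_ge h] at hu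
      simp only
      rw [abs_of_nonpos (by linarith [hu.2] : u - s₀ ≤ 0), neg_sub]
    rw [intervalIntegral.integral_congr hcong]
    have h2 : ∫ u in s₀..s, C * (s₀ - u) ^ m = C * (-((s₀ - s) ^ (m+1) / (m+1))) := by
      rw [intervalIntegral.integral_const_mul]
      congr 1
      have h3 : ∫ u in s₀..s, (s₀ - u) ^ m = ∫ u in s₀ - s..s₀ - s₀, u ^ m :=
        intervalIntegral.integral_comp_sub_left (fun u => u ^ m) s₀
      rw [h3, sub_self, integral_pow, zero_pow (Nat.succ_ne_zero m), zero_sub, neg_div]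
    have hA : (0:ℝ) ≤ (s₀ - s) ^ (m + 1) := pow_nonneg (by linarith) _
    rw [h2]
    have h4 : C * (-((s₀ - s) ^ (m+1) / (m+1))) = -(C * ((s₀ - s) ^ (m+1) / (m+1))) := by ring
    rw [h4, abs_neg, abs_of_nonneg (by positivity), abs_of_nonpos (by linarith : s - s₀ ≤ 0),
      neg_sub]
    ring

section Picard

variable {E : Type*} [NormedAddCommGroup E] [InnerProductSpace ℝ E] [CompleteSpace E]
  [MeasurableSpace E] [BorelSpace E] [SecondCountableTopology E]

/-- Existence and uniqueness of solutions of the linear "parallel transport" integral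
equation on a compact interval. -/
lemma RPF.solveIVP {TT DD : ℝ → E} (hT : Measurable TT) (hD : Measurable DD)
    {c d s₀ : ℝ} (hc : c ≤ s₀) (hd : s₀ ≤ d) {K : ℝ} (hK : 0 ≤ K)
    (hbd : ∀ᵐ u, u ∈ Icc c d → ‖DD u‖ * ‖TT u‖ ≤ K) (v : E) :
    ∃ N : ℝ → E, (ContinuousOn N (Icc c d) ∧
        ∀ s ∈ Icc c d, N s = v - ∫ u in s₀..s, (inner ℝ (N u) (DD u) : ℝ) • TT u) ∧
      ∀ M : ℝ → E, ContinuousOn M (Icc c d) →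
        (∀ s ∈ Icc c d, M s = v - ∫ u in s₀..s, (inner ℝ (M u) (DD u) : ℝ) • TT u) →
        EqOn M N (Icc c d) := by
  have hcd : c ≤ d := hc.trans hd
  have hs₀ : s₀ ∈ Icc c d := ⟨hc, hd⟩
  haveI : IsFiniteMeasure (volume.restrict (Icc c d)) :=
    ⟨by rw [Measure.restrict_apply_univ]; exact measure_Icc_lt_top⟩
  have hproj : ∀ u ∈ Icc c d, ((projIcc c d hcd u : Icc c d) : ℝ) = u := by
    intro u hu; rw [projIcc_of_mem hcd hu]
  -- integrability of the integrand for any continuous map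
  have hfint : ∀ f : C(Icc c d, E), IntegrableOn
      (fun u => (inner ℝ (f (projIcc c d hcd u)) (DD u) : ℝ) • TT u) (Icc c d) volume := by
    intro f
    have hcont : Continuous fun u => f (projIcc c d hcd u) :=
      f.continuous.comp continuous_projIcc
    have hm : AEStronglyMeasurable
        (fun u => (inner ℝ (f (projIcc c d hcd u)) (DD u) : ℝ) • TT u)
        (volume.restrict (Icc c d)) :=
      ((hcont.aestronglyMeasurable).inner hD.aestronglyMeasurable).smul
        hT.aestronglyMeasurable
    refine Integrable.mono' (integrable_const (‖f‖ * K)) hm ?_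
    filter_upwards [ae_restrict_of_ae hbd, self_mem_ae_restrict measurableSet_Icc]
      with u h1 h2
    rw [norm_smul, Real.norm_eq_abs]
    calc |(inner ℝ (f (projIcc c d hcd u)) (DD u) : ℝ)| * ‖TT u‖
        ≤ ‖f (projIcc c d hcd u)‖ * ‖DD u‖ * ‖TT u‖ :=
          mul_le_mul_of_nonneg_right (abs_real_inner_le_norm _ _) (norm_nonneg _)
      _ = ‖f (projIcc c d hcd u)‖ * (‖DD u‖ * ‖TT u‖) := by ring
      _ ≤ ‖f‖ * K := mul_le_mul (f.norm_coe_le_norm _) (h1 h2) (by positivity) (norm_nonneg f)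
  have hii : ∀ (f : C(Icc c d, E)) (x y : ℝ), x ∈ Icc c d → y ∈ Icc c d →
      IntervalIntegrable
        (fun u => (inner ℝ (f (projIcc c d hcd u)) (DD u) : ℝ) • TT u) volume x y := by
    intro f x y hx hy
    have h1 : Ι x y ⊆ Icc c d := uIoc_subset_uIcc.trans (uIcc_subset_Icc hx hy)
    have h2 : IntegrableOn (fun u => (inner ℝ (f (projIcc c d hcd u)) (DD u) : ℝ) • TT u)
        (Ι x y) volume := (hfint f).mono_set h1
    exact intervalIntegrable_iff.2 h2
  -- continuity of the Picard map output
  have hPcont : ∀ f : C(Icc c d, E), Continuous fun s : Icc c d =>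
      v - ∫ u in s₀..(s:ℝ), (inner ℝ (f (projIcc c d hcd u)) (DD u) : ℝ) • TT u := by
    intro f
    have hprim : ContinuousOn
        (fun x => ∫ u in c..x, (inner ℝ (f (projIcc c d hcd u)) (DD u) : ℝ) • TT u)
        (Icc c d) := by
      have := intervalIntegral.continuousOn_primitive_interval
        (f := fun u => (inner ℝ (f (projIcc c d hcd u)) (DD u) : ℝ) • TT u)
        (a := c) (b := d) (μ := volume) (by rw [uIcc_of_le hcd]; exact hfint f)
      rwa [uIcc_of_le hcd] at this
    have heq2 : (fun s : Icc c d =>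
        v - ∫ u in s₀..(s:ℝ), (inner ℝ (f (projIcc c d hcd u)) (DD u) : ℝ) • TT u)
        = fun s : Icc c d => v -
          ((∫ u in c..(s:ℝ), (inner ℝ (f (projIcc c d hcd u)) (DD u) : ℝ) • TT u)
          - ∫ u in c..s₀, (inner ℝ (f (projIcc c d hcd u)) (DD u) : ℝ) • TT u) := by
      funext s
      congr 1
      exact eq_sub_of_add_eq'
        (intervalIntegral.integral_add_adjacent_intervals
          (hii f c s₀ ⟨le_refl c, hcd⟩ hs₀) (hii f s₀ ↑s hs₀ s.2))
    rw [heq2]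
    exact continuous_const.sub
      ((hprim.comp_continuous continuous_subtype_val (fun s => s.2)).sub continuous_const)
  set P : C(Icc c d, E) → C(Icc c d, E) := fun f => ContinuousMap.mk _ (hPcont f) with hPdef
  have hPapply : ∀ (f : C(Icc c d, E)) (s : Icc c d),
      P f s = v - ∫ u in s₀..(s:ℝ), (inner ℝ (f (projIcc c d hcd u)) (DD u) : ℝ) • TT u :=
    fun f s => rfl
  -- one step of the Picard estimate
  have hstep : ∀ (F G : C(Icc c d, E)) (B : ℝ) (m : ℕ), 0 ≤ B →
      (∀ s : Icc c d, ‖F s - G s‖ ≤ B * (K * |(s:ℝ) - s₀|) ^ m / m.factorial) →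
      ∀ s : Icc c d, ‖P F s - P G s‖ ≤ B * (K * |(s:ℝ) - s₀|) ^ (m+1) / (m+1).factorial := by
    intro F G B m hB hFG s
    rw [hPapply, hPapply, sub_sub_sub_cancel_left, ← intervalIntegral.integral_sub
      (hii G s₀ ↑s hs₀ s.2) (hii F s₀ ↑s hs₀ s.2)]
    set C : ℝ := B * K ^ (m+1) / m.factorial with hCdef
    have hC : 0 ≤ C := by positivity
    have hbound : ‖∫ u in s₀..(s:ℝ),
        ((inner ℝ (G (projIcc c d hcd u)) (DD u) : ℝ) • TT u
          - (inner ℝ (F (projIcc c d hcd u)) (DD u) : ℝ) • TT u)‖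
        ≤ |∫ u in s₀..(s:ℝ), C * |u - s₀| ^ m| := by
      refine intervalIntegral.norm_integral_le_abs_of_norm_le ?_ ?_
      · filter_upwards [ae_restrict_of_ae hbd, self_mem_ae_restrict measurableSet_uIoc]
          with u h1 h2
        have hu : u ∈ Icc c d := (uIoc_subset_uIcc.trans (uIcc_subset_Icc hs₀ s.2)) h2
        have hDT : ‖DD u‖ * ‖TT u‖ ≤ K := h1 hu
        have hdiff : (inner ℝ (G (projIcc c d hcd u)) (DD u) : ℝ) • TT u
            - (inner ℝ (F (projIcc c d hcd u)) (DD u) : ℝ) • TT u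
            = (inner ℝ (G (projIcc c d hcd u) - F (projIcc c d hcd u)) (DD u) : ℝ) • TT u := by
          rw [inner_sub_left, sub_smul]
        rw [hdiff, norm_smul, Real.norm_eq_abs]
        have hFGu : ‖G (projIcc c d hcd u) - F (projIcc c d hcd u)‖
            ≤ B * (K * |u - s₀|) ^ m / m.factorial := by
          have := hFG (projIcc c d hcd u)
          rw [norm_sub_rev] at this
          rwa [hproj u hu] at this
        calc |(inner ℝ (G (projIcc c d hcd u) - F (projIcc c d hcd u)) (DD u) : ℝ)| * ‖TT u‖
            ≤ ‖G (projIcc c d hcd u) - F (projIcc c d hcd u)‖ * ‖DD u‖ * ‖TT u‖ :=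
              mul_le_mul_of_nonneg_right (abs_real_inner_le_norm _ _) (norm_nonneg _)
          _ = ‖G (projIcc c d hcd u) - F (projIcc c d hcd u)‖ * (‖DD u‖ * ‖TT u‖) := by ring
          _ ≤ (B * (K * |u - s₀|) ^ m / m.factorial) * K :=
              mul_le_mul hFGu hDT (by positivity) (by positivity)
          _ = C * |u - s₀| ^ m := by rw [hCdef, mul_pow]; ring
      · exact (Continuous.intervalIntegrable (by continuity) s₀ ↑s)
    refine hbound.trans ?_
    rw [RPF.abs_integral_abs_pow s₀ ↑s C m hC]
    have hfac : (m.factorial:ℝ) ≠ 0 := by positivity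
    have hm1 : ((m:ℝ) + 1) ≠ 0 := by positivity
    have heq : C * |(s:ℝ) - s₀| ^ (m+1) / ((m:ℝ) + 1)
        = B * (K * |(s:ℝ) - s₀|) ^ (m+1) / ((m+1).factorial : ℝ) := by
      rw [hCdef, Nat.factorial_succ, mul_pow]
      push_cast
      field_simp
    rw [heq]
  -- iterated estimate
  have hiter : ∀ (m : ℕ) (f g : C(Icc c d, E)) (s : Icc c d),
      ‖(P^[m] f) s - (P^[m] g) s‖ ≤ dist f g * (K * |(s:ℝ) - s₀|) ^ m / m.factorial := by
    intro m
    induction m with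
    | zero =>
      intro f g s
      simp only [Function.iterate_zero, id_eq, pow_zero, Nat.factorial_zero, Nat.cast_one,
        mul_one, div_one]
      rw [← dist_eq_norm]
      exact ContinuousMap.dist_apply_le_dist s
    | succ m ih =>
      intro f g s
      rw [Function.iterate_succ_apply', Function.iterate_succ_apply']
      exact hstep (P^[m] f) (P^[m] g) (dist f g) m dist_nonneg (ih f g) s
  have hsub0 : (0:ℝ) ≤ d - c := sub_nonneg.2 hcd
  have habs : ∀ s : Icc c d, |(s:ℝ) - s₀| ≤ d - c := by
    intro s
    rw [abs_le]
    constructor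
    · have := s.2.1; linarith
    · have := s.2.2; linarith
  have hq : ∀ (m : ℕ) (f g : C(Icc c d, E)),
      dist (P^[m] f) (P^[m] g) ≤ (K * (d - c)) ^ m / m.factorial * dist f g := by
    intro m f g
    have hrhs : (0:ℝ) ≤ (K * (d - c)) ^ m / m.factorial * dist f g := by positivity
    rw [ContinuousMap.dist_le hrhs]
    intro x
    rw [dist_eq_norm]
    refine (hiter m f g x).trans ?_
    have hKx : K * |(x:ℝ) - s₀| ≤ K * (d - c) := mul_le_mul_of_nonneg_left (habs x) hK
    have hpow : (K * |(x:ℝ) - s₀|) ^ m ≤ (K * (d - c)) ^ m :=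
      pow_le_pow_left₀ (by positivity) hKx m
    calc dist f g * (K * |(x:ℝ) - s₀|) ^ m / ↑m.factorial
        ≤ dist f g * (K * (d - c)) ^ m / ↑m.factorial := by gcongr
      _ = (K * (d - c)) ^ m / ↑m.factorial * dist f g := by ring
  -- uniqueness of fixed points of P
  have hfixuniq : ∀ f g : C(Icc c d, E), Function.IsFixedPt P f → Function.IsFixedPt P g →
      f = g := by
    intro f g hf hg
    have hle : ∀ m : ℕ, dist f g ≤ (K * (d - c)) ^ m / m.factorial * dist f g := by
      intro m
      have h1 : P^[m] f = f := hf.iterate m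
      have h2 : P^[m] g = g := hg.iterate m
      calc dist f g = dist (P^[m] f) (P^[m] g) := by rw [h1, h2]
        _ ≤ (K * (d - c)) ^ m / m.factorial * dist f g := hq m f g
    have htend : Tendsto (fun m : ℕ => (K * (d - c)) ^ m / m.factorial * dist f g)
        atTop (nhds 0) := by
      have h0 := (FloorSemiring.tendsto_pow_div_factorial_atTop (K * (d - c))).mul_const
        (dist f g)
      rwa [zero_mul] at h0
    have : dist f g ≤ 0 := ge_of_tendsto' htend hle
    rw [← dist_eq_zero]
    exact le_antisymm this dist_nonneg
  -- existence of a fixed point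
  obtain ⟨m, hm⟩ := ((FloorSemiring.tendsto_pow_div_factorial_atTop
    (K * (d - c))).eventually_lt_const zero_lt_one).exists
  have hqm : (0:ℝ) ≤ (K * (d - c)) ^ m / m.factorial := by positivity
  set κ : NNReal := Real.toNNReal ((K * (d - c)) ^ m / m.factorial) with hκdef
  have hκcoe : (κ : ℝ) = (K * (d - c)) ^ m / m.factorial := Real.coe_toNNReal _ hqm
  have hcontr : ContractingWith κ (P^[m]) := by
    constructor
    · rw [← NNReal.coe_lt_coe, hκcoe, NNReal.coe_one]
      exact hm
    · refine LipschitzWith.of_dist_le_mul ?_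
      intro f g
      rw [hκcoe]
      exact hq m f g
  haveI : Nonempty (C(Icc c d, E)) := ⟨ContinuousMap.const _ 0⟩
  set x : C(Icc c d, E) := hcontr.fixedPoint (P^[m]) with hxdef
  have hfixm : Function.IsFixedPt (P^[m]) x := hcontr.fixedPoint_isFixedPt
  have hPxfix : Function.IsFixedPt (P^[m]) (P x) := by
    show P^[m] (P x) = P x
    rw [← Function.iterate_succ_apply, Function.iterate_succ_apply', hfixm]
  have hPx : P x = x := hcontr.fixedPoint_unique hPxfix
  have hxfix : Function.IsFixedPt P x := hPx
  -- the solution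
  refine ⟨fun u => x (projIcc c d hcd u), ⟨?_, ?_⟩, ?_⟩
  · exact (x.continuous.comp continuous_projIcc).continuousOn
  · intro s hs
    show x (projIcc c d hcd s) = v - ∫ u in s₀..s, (inner ℝ (x (projIcc c d hcd u)) (DD u) : ℝ) • TT u
    rw [projIcc_of_mem hcd hs]
    have h2 := (DFunLike.congr_fun hPx ⟨s, hs⟩).symm
    rw [hPapply] at h2
    exact h2
  · intro M hMc hMeq s hs
    set fM : C(Icc c d, E) := ContinuousMap.mk ((Icc c d).restrict M) hMc.restrict with hfMdef
    have hfMapp : ∀ t : Icc c d, fM t = M ↑t := fun t => rfl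
    have hfixM : Function.IsFixedPt P fM := by
      show P fM = fM
      ext t
      rw [hPapply, hfMapp]
      have hcongr : ∫ u in s₀..(t:ℝ),
          (inner ℝ (fM (projIcc c d hcd u)) (DD u) : ℝ) • TT u
          = ∫ u in s₀..(t:ℝ), (inner ℝ (M u) (DD u) : ℝ) • TT u := by
        refine intervalIntegral.integral_congr ?_
        intro u hu
        have hu2 : u ∈ Icc c d := uIcc_subset_Icc hs₀ t.2 hu
        simp only
        rw [projIcc_of_mem hcd hu2]
        rfl
      rw [hcongr, ← hMeq ↑t t.2]
    have hMx : fM = x := hfixuniq fM x hfixM hxfix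
    have h5 : M s = fM ⟨s, hs⟩ := rfl
    show M s = x (projIcc c d hcd s)
    rw [h5, hMx, projIcc_of_mem hcd hs]

end Picard

/-- Locally constant on an open order-connected set implies constant. -/
lemma RPF.locally_constant_spread {I : Set ℝ} (hIopen : IsOpen I) (hIconn : I.OrdConnected)
    {g : ℝ → ℝ} (h : ∀ x ∈ I, ∀ᶠ y in nhds x, g y = g x) :
    ∀ x ∈ I, ∀ y ∈ I, g x = g y := by
  haveI := Subtype.preconnectedSpace hIconn.isPreconnected
  have hlc : IsLocallyConstant (fun z : I => g ↑z) := by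
    rw [IsLocallyConstant.iff_eventually_eq]
    intro z
    exact (continuous_subtype_val.tendsto z).eventually (h ↑z z.2)
  exact fun x hx y hy => hlc.apply_eq_of_preconnectedSpace ⟨x, hx⟩ ⟨y, hy⟩

/-- A locally Lipschitz function on an open interval with a.e. vanishing derivative
is constant. -/
lemma RPF.const_on_of_loclip {I : Set ℝ} (hIopen : IsOpen I) (hIconn : I.OrdConnected)
    {g : ℝ → ℝ}
    (hlip : ∀ x ∈ I, ∃ ε > 0, Icc (x - ε) (x + ε) ⊆ I ∧
      ∃ L : NNReal, LipschitzOnWith L g (Icc (x - ε) (x + ε)))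
    (hae : ∀ᵐ x, x ∈ I → HasDerivAt g 0 x) :
    ∀ x ∈ I, ∀ y ∈ I, g x = g y := by
  apply RPF.locally_constant_spread hIopen hIconn
  intro x hx
  obtain ⟨ε, hε, hsub, L, hL⟩ := hlip x hx
  have hconst := RPF.const_of_ae_deriv_zero hL (by
    filter_upwards [hae] with u hu hu2
    exact hu (hsub (Ioo_subset_Icc_self hu2)))
  have hmem : Icc (x - ε) (x + ε) ∈ nhds x := Icc_mem_nhds (by linarith) (by linarith)
  filter_upwards [hmem] with y hy
  exact hconst y hy x ⟨by linarith, by linarith⟩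

/-- Lipschitz bound for the inner product of two bounded Lipschitz maps. -/
lemma RPF.lipschitzOnWith_inner {E : Type*} [NormedAddCommGroup E] [InnerProductSpace ℝ E]
    {f g : ℝ → E} {s : Set ℝ} {Lf Lg : NNReal} {A B : ℝ}
    (hf : LipschitzOnWith Lf f s) (hg : LipschitzOnWith Lg g s)
    (hA : ∀ x ∈ s, ‖f x‖ ≤ A) (hB : ∀ x ∈ s, ‖g x‖ ≤ B) :
    ∃ L : NNReal, LipschitzOnWith L (fun x => (inner ℝ (f x) (g x) : ℝ)) s := by
  refine ⟨Real.toNNReal ((Lf : ℝ) * B + (Lg : ℝ) * A), LipschitzOnWith.of_dist_le_mul ?_⟩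
  intro x hx y hy
  have hA0 : 0 ≤ A := le_trans (norm_nonneg _) (hA x hx)
  have hB0 : 0 ≤ B := le_trans (norm_nonneg _) (hB x hx)
  rw [Real.dist_eq, Real.coe_toNNReal _ (by positivity)]
  have key : (inner ℝ (f x) (g x) : ℝ) - inner ℝ (f y) (g y)
      = inner ℝ (f x - f y) (g x) + (inner ℝ (f y) (g x - g y) : ℝ) := by
    rw [inner_sub_left, inner_sub_right]; ring
  rw [key]
  have h1 : ‖f x - f y‖ ≤ (Lf : ℝ) * dist x y := by
    rw [← dist_eq_norm]; exact hf.dist_le_mul x hx y hy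
  have h2 : ‖g x - g y‖ ≤ (Lg : ℝ) * dist x y := by
    rw [← dist_eq_norm]; exact hg.dist_le_mul x hx y hy
  calc |(inner ℝ (f x - f y) (g x) : ℝ) + inner ℝ (f y) (g x - g y)|
      ≤ |(inner ℝ (f x - f y) (g x) : ℝ)| + |(inner ℝ (f y) (g x - g y) : ℝ)| := abs_add_le _ _
    _ ≤ ‖f x - f y‖ * ‖g x‖ + ‖f y‖ * ‖g x - g y‖ :=
        add_le_add (abs_real_inner_le_norm _ _) (abs_real_inner_le_norm _ _)
    _ ≤ ((Lf : ℝ) * dist x y) * B + A * ((Lg : ℝ) * dist x y) :=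
        add_le_add (mul_le_mul h1 (hB x hx) (norm_nonneg _) (by positivity))
          (mul_le_mul (hA y hy) h2 (norm_nonneg _) hA0)
    _ = ((Lf : ℝ) * B + (Lg : ℝ) * A) * dist x y := by ring


/-- Every unit-speed curve of class `C^{1,1}` on an open interval admits a
unique relatively parallel adapted frame with prescribed initial normal vectors. -/
theorem relatively_parallel_adapted_frame_exists_unique
    (n : ℕ) (hn : 1 ≤ n)
    (I : Set ℝ) (hIopen : IsOpen I) (hIconn : I.OrdConnected)
    (Γ : ℝ → EuclideanSpace ℝ (Fin (n + 1)))
    (hΓd : ∀ s ∈ I, DifferentiableAt ℝ Γ s)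
    (hΓlip : ∀ s ∈ I, ∃ ε : ℝ, 0 < ε ∧ Ioo (s - ε) (s + ε) ⊆ I ∧
      ∃ L : NNReal, LipschitzOnWith L (deriv Γ) (Ioo (s - ε) (s + ε)))
    (hunit : ∀ s ∈ I, ‖deriv Γ s‖ = 1)
    (s₀ : ℝ) (hs₀ : s₀ ∈ I)
    (N0 : Fin n → EuclideanSpace ℝ (Fin (n + 1)))
    (hON0 : Orthonormal ℝ
      (Fin.cons (deriv Γ s₀) N0 : Fin (n + 1) → EuclideanSpace ℝ (Fin (n + 1)))) :
    ∃ N : Fin n → ℝ → EuclideanSpace ℝ (Fin (n + 1)),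
      ((∀ j, N j s₀ = N0 j) ∧
        (∀ j, ∀ s ∈ I, ∃ ε : ℝ, 0 < ε ∧
          ∃ L : NNReal, LipschitzOnWith L (N j) (Ioo (s - ε) (s + ε))) ∧
        (∀ s ∈ I, Orthonormal ℝ
          (Fin.cons (deriv Γ s) (fun j => N j s) :
            Fin (n + 1) → EuclideanSpace ℝ (Fin (n + 1)))) ∧
        (∀ᵐ s ∂((volume : Measure ℝ).restrict I),
          ∀ j, ∃ c : ℝ, HasDerivAt (N j) (c • deriv Γ s) s)) ∧
      ∀ M : Fin n → ℝ → EuclideanSpace ℝ (Fin (n + 1)),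
        ((∀ j, M j s₀ = N0 j) ∧
          (∀ j, ∀ s ∈ I, ∃ ε : ℝ, 0 < ε ∧
            ∃ L : NNReal, LipschitzOnWith L (M j) (Ioo (s - ε) (s + ε))) ∧
          (∀ s ∈ I, Orthonormal ℝ
            (Fin.cons (deriv Γ s) (fun j => M j s) :
              Fin (n + 1) → EuclideanSpace ℝ (Fin (n + 1)))) ∧
          (∀ᵐ s ∂((volume : Measure ℝ).restrict I),
            ∀ j, ∃ c : ℝ, HasDerivAt (M j) (c • deriv Γ s) s)) →
        ∀ j, ∀ s ∈ I, M j s = N j s := by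
  classical
  have hTmeas : Measurable (deriv Γ) := measurable_deriv Γ
  have hDmeas : Measurable (deriv (deriv Γ)) := measurable_deriv (deriv Γ)
  -- basic interval facts
  have hball : ∀ s ∈ I, ∃ ε > 0, Icc (s - ε) (s + ε) ⊆ I := by
    intro s hs
    obtain ⟨ε, hε, hsub⟩ := Metric.isOpen_iff.1 hIopen s hs
    refine ⟨ε / 2, by positivity, fun u hu => hsub ?_⟩
    rw [Metric.mem_ball, Real.dist_eq, abs_lt]
    constructor <;> [linarith [hu.1]; linarith [hu.2] ]
  have hmmI : ∀ x ∈ I, ∀ y ∈ I, Icc (min x y) (max x y) ⊆ I := by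
    intro x hx y hy
    rcases le_total x y with h | h
    · rw [min_eq_left h, max_eq_right h]; exact hIconn.out hx hy
    · rw [min_eq_right h, max_eq_left h]; exact hIconn.out hy hx
  -- local Lipschitz data for T on closed intervals
  have hTlip : ∀ s ∈ I, ∃ ε > 0, Icc (s - ε) (s + ε) ⊆ I ∧
      ∃ L : NNReal, LipschitzOnWith L (deriv Γ) (Icc (s - ε) (s + ε)) := by
    intro s hs
    obtain ⟨ε, hε, hsub, L, hL⟩ := hΓlip s hs
    refine ⟨ε / 2, by positivity, ?_, L, hL.mono ?_⟩
    · intro u hu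
      exact hsub ⟨by linarith [hu.1], by linarith [hu.2]⟩
    · intro u hu
      exact ⟨by linarith [hu.1], by linarith [hu.2]⟩
  choose! εf hεf hsubf Lf hLipf using hTlip
  -- a.e. differentiability of T on I
  have hTd : ∀ᵐ u, u ∈ I → HasDerivAt (deriv Γ) (deriv (deriv Γ) u) u := by
    obtain ⟨Tc, hTcount, hTeq⟩ := TopologicalSpace.isOpen_iUnion_countable
      (ι := I) (fun z => Ioo ((z : ℝ) - εf z) ((z : ℝ) + εf z)) (fun z => isOpen_Ioo)
    have hper : ∀ z : I, ∀ᵐ u, u ∈ Ioo ((z : ℝ) - εf z) ((z : ℝ) + εf z) →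
        HasDerivAt (deriv Γ) (deriv (deriv Γ) u) u := by
      intro z
      have hlip := (hLipf (z : ℝ) z.2).mono Ioo_subset_Icc_self
      have hrad := hlip.ae_differentiableWithinAt (μ := volume) measurableSet_Ioo
      rw [ae_restrict_iff' measurableSet_Ioo] at hrad
      filter_upwards [hrad] with u hu hu2
      exact ((hu hu2).differentiableAt (isOpen_Ioo.mem_nhds hu2)).hasDerivAt
    have hall : ∀ᵐ u, ∀ z ∈ Tc, u ∈ Ioo ((z : ℝ) - εf z) ((z : ℝ) + εf z) →
        HasDerivAt (deriv Γ) (deriv (deriv Γ) u) u :=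
      (ae_ball_iff hTcount).2 fun z _ => hper z
    filter_upwards [hall] with u hu huI
    have humem : u ∈ ⋃ z : I, Ioo ((z : ℝ) - εf z) ((z : ℝ) + εf z) := by
      refine mem_iUnion.2 ⟨⟨u, huI⟩, ?_⟩
      have := hεf u huI
      simp only [mem_Ioo]
      constructor <;> linarith
    rw [← hTeq] at humem
    obtain ⟨z, hzT, hz⟩ := mem_iUnion₂.1 humem
    exact hu z hzT hz
  -- a.e. bound on compact subintervals
  have hKcc : ∀ a b : ℝ, Icc a b ⊆ I → ∃ K : ℝ, 0 ≤ K ∧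
      ∀ᵐ u, u ∈ Icc a b → ‖deriv (deriv Γ) u‖ * ‖deriv Γ u‖ ≤ K := by
    intro a b hab
    have hcov : Icc a b ⊆ ⋃ s ∈ I, Ioo (s - εf s) (s + εf s) := by
      intro u hu
      refine mem_biUnion (hab hu) ?_
      have := hεf u (hab hu)
      simp only [mem_Ioo]
      constructor <;> linarith
    obtain ⟨t, htI, htfin, htcov⟩ := isCompact_Icc.elim_finite_subcover_image
      (fun s _ => isOpen_Ioo) hcov
    refine ⟨((htfin.toFinset.sup Lf : NNReal) : ℝ), NNReal.coe_nonneg _, ?_⟩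
    filter_upwards [hTd] with u hu huab
    obtain ⟨s, hst, hus⟩ := mem_iUnion₂.1 (htcov huab)
    have hsI : s ∈ I := htI hst
    have hder : HasDerivAt (deriv Γ) (deriv (deriv Γ) u) u := hu (hab huab)
    have hnhds : Icc (s - εf s) (s + εf s) ∈ nhds u :=
      Filter.mem_of_superset (isOpen_Ioo.mem_nhds hus) Ioo_subset_Icc_self
    have hb := RPF.norm_hasDerivAt_le_of_lip hnhds (hLipf s hsI) hder
    have hTn : ‖deriv Γ u‖ = 1 := hunit u (hab huab)
    rw [hTn, mul_one]
    refine hb.trans ?_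
    exact_mod_cast NNReal.coe_le_coe.2 (Finset.le_sup (htfin.mem_toFinset.2 hst))
  -- global existence of solutions of the transport equation
  have hGlob : ∀ v : EuclideanSpace ℝ (Fin (n + 1)), ∃ N : ℝ → EuclideanSpace ℝ (Fin (n + 1)),
      ContinuousOn N I ∧ ∀ s ∈ I, N s = v - ∫ u in s₀..s,
        (inner ℝ (N u) (deriv (deriv Γ) u) : ℝ) • deriv Γ u := by
    intro v
    have hloc : ∀ p : ℝ × ℝ, ∃ N : ℝ → EuclideanSpace ℝ (Fin (n + 1)),
        (p.1 ≤ s₀ ∧ s₀ ≤ p.2 ∧ Icc p.1 p.2 ⊆ I) →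
        ((ContinuousOn N (Icc p.1 p.2) ∧ ∀ s ∈ Icc p.1 p.2, N s = v - ∫ u in s₀..s,
            (inner ℝ (N u) (deriv (deriv Γ) u) : ℝ) • deriv Γ u) ∧
          ∀ M : ℝ → EuclideanSpace ℝ (Fin (n + 1)), ContinuousOn M (Icc p.1 p.2) →
            (∀ s ∈ Icc p.1 p.2, M s = v - ∫ u in s₀..s,
              (inner ℝ (M u) (deriv (deriv Γ) u) : ℝ) • deriv Γ u) →
            EqOn M N (Icc p.1 p.2)) := by
      intro p
      by_cases hp : p.1 ≤ s₀ ∧ s₀ ≤ p.2 ∧ Icc p.1 p.2 ⊆ I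
      · obtain ⟨K, hK0, hKb⟩ := hKcc p.1 p.2 hp.2.2
        obtain ⟨Nl, hNl⟩ := RPF.solveIVP hTmeas hDmeas hp.1 hp.2.1 hK0 hKb v
        exact ⟨Nl, fun _ => hNl⟩
      · exact ⟨0, fun h => absurd h hp⟩
    choose sol hsol using hloc
    have hcons : ∀ a b a' b' (h : a ≤ s₀ ∧ s₀ ≤ b ∧ Icc a b ⊆ I)
        (h' : a' ≤ s₀ ∧ s₀ ≤ b' ∧ Icc a' b' ⊆ I), a' ≤ a → b ≤ b' →
        EqOn (sol (a', b')) (sol (a, b)) (Icc a b) := by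
      intro a b a' b' h h' ha hb
      have hsub : Icc a b ⊆ Icc a' b' := Icc_subset_Icc ha hb
      exact (hsol (a, b) h).2 (sol (a', b')) ((hsol (a', b') h').1.1.mono hsub)
        (fun s hs => (hsol (a', b') h').1.2 s (hsub hs))
    have hcond : ∀ s ∈ I, min s s₀ ≤ s₀ ∧ s₀ ≤ max s s₀ ∧ Icc (min s s₀) (max s s₀) ⊆ I :=
      fun s hs => ⟨min_le_right _ _, le_max_right _ _, hmmI s hs s₀ hs₀⟩
    obtain ⟨Nf, hNf⟩ : ∃ Nf : ℝ → EuclideanSpace ℝ (Fin (n + 1)),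
        ∀ x ∈ I, Nf x = sol (min x s₀, max x s₀) x :=
      ⟨fun s => if hs : s ∈ I then sol (min s s₀, max s s₀) s else 0, fun x hx => dif_pos hx⟩
    have hagree : ∀ a b (h : a ≤ s₀ ∧ s₀ ≤ b ∧ Icc a b ⊆ I), EqOn Nf (sol (a, b)) (Icc a b) := by
      intro a b h x hx
      have hxI : x ∈ I := h.2.2 hx
      rw [hNf x hxI]
      have hx2 : x ∈ Icc (min x s₀) (max x s₀) := ⟨min_le_left _ _, le_max_left _ _⟩
      exact (hcons (min x s₀) (max x s₀) a b (hcond x hxI) h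
        (le_min hx.1 h.1) (max_le hx.2 h.2.1) hx2).symm
    have hNcont : ContinuousOn Nf I := by
      intro s hs
      obtain ⟨ε, hε, hsub⟩ := hball s hs
      have haI : min (s - ε) s₀ ≤ s₀ ∧ s₀ ≤ max (s + ε) s₀ ∧
          Icc (min (s - ε) s₀) (max (s + ε) s₀) ⊆ I := by
        refine ⟨min_le_right _ _, le_max_right _ _, ?_⟩
        have h1 : s - ε ∈ I := hsub ⟨le_refl _, by linarith⟩
        have h2 : s + ε ∈ I := hsub ⟨by linarith, le_refl _⟩
        rcases le_total (s - ε) s₀ with h | h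
        · rw [min_eq_left h]
          rcases le_total (s + ε) s₀ with h' | h'
          · rw [max_eq_right h']; exact hIconn.out h1 hs₀
          · rw [max_eq_left h']; exact hIconn.out h1 h2
        · rw [min_eq_right h]
          rcases le_total (s + ε) s₀ with h' | h'
          · rw [max_eq_right h']; exact hIconn.out hs₀ hs₀
          · rw [max_eq_left h']; exact hIconn.out hs₀ h2
      have hker : ∀ᶠ y in nhds s, Nf y = sol (min (s - ε) s₀, max (s + ε) s₀) y := by
        have hmem : Icc (s - ε) (s + ε) ∈ nhds s := Icc_mem_nhds (by linarith) (by linarith)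
        filter_upwards [hmem] with y hy
        exact hagree _ _ haI ⟨le_trans (min_le_left _ _) hy.1, le_trans hy.2 (le_max_left _ _)⟩
      have hc2 : ContinuousAt (sol (min (s - ε) s₀, max (s + ε) s₀)) s := by
        refine ((hsol _ haI).1.1).continuousAt (Filter.mem_of_superset
          (Icc_mem_nhds (show s - ε < s by linarith) (show s < s + ε by linarith))
          (Icc_subset_Icc (min_le_left _ _) (le_max_left _ _)))
      exact ((continuousAt_congr hker).2 hc2).continuousWithinAt
    have hNeq : ∀ s ∈ I, Nf s = v - ∫ u in s₀..s,
        (inner ℝ (Nf u) (deriv (deriv Γ) u) : ℝ) • deriv Γ u := by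
      intro s hs
      have hs2 : s ∈ Icc (min s s₀) (max s s₀) := ⟨min_le_left _ _, le_max_left _ _⟩
      have hs₀2 : s₀ ∈ Icc (min s s₀) (max s s₀) := ⟨min_le_right _ _, le_max_right _ _⟩
      rw [hagree _ _ (hcond s hs) hs2, (hsol _ (hcond s hs)).1.2 s hs2]
      congr 1
      refine intervalIntegral.integral_congr ?_
      intro u hu
      have hu2 : u ∈ Icc (min s s₀) (max s s₀) := uIcc_subset_Icc hs₀2 hs2 hu
      simp only [hagree _ _ (hcond s hs) hu2]
    exact ⟨Nf, hNcont, hNeq⟩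
  -- choose the normal fields
  choose N hNcont hNeq using fun j : Fin n => hGlob (N0 j)
  have hNs₀ : ∀ j, N j s₀ = N0 j := by
    intro j
    have h := hNeq j s₀ hs₀
    rwa [intervalIntegral.integral_same, sub_zero] at h
  -- integrability of the integrands
  have hwOn : ∀ (j : Fin n) (a b : ℝ), Icc a b ⊆ I → IntegrableOn
      (fun u => (inner ℝ (N j u) (deriv (deriv Γ) u) : ℝ) • deriv Γ u) (Icc a b) volume := by
    intro j a b hab
    haveI : IsFiniteMeasure (volume.restrict (Icc a b)) :=
      ⟨by rw [Measure.restrict_apply_univ]; exact measure_Icc_lt_top⟩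
    obtain ⟨K, hK0, hKb⟩ := hKcc a b hab
    obtain ⟨C, hC⟩ := isCompact_Icc.exists_bound_of_continuousOn ((hNcont j).mono hab)
    have hm : AEStronglyMeasurable
        (fun u => (inner ℝ (N j u) (deriv (deriv Γ) u) : ℝ) • deriv Γ u)
        (volume.restrict (Icc a b)) :=
      ((((hNcont j).mono hab).aestronglyMeasurable measurableSet_Icc).inner (𝕜 := ℝ)
        hDmeas.aestronglyMeasurable).smul hTmeas.aestronglyMeasurable
    refine Integrable.mono' (integrable_const (C * K)) hm ?_
    filter_upwards [ae_restrict_of_ae hKb, self_mem_ae_restrict measurableSet_Icc]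
      with u h1 h2
    rw [norm_smul, Real.norm_eq_abs]
    calc |(inner ℝ (N j u) (deriv (deriv Γ) u) : ℝ)| * ‖deriv Γ u‖
        ≤ ‖N j u‖ * ‖deriv (deriv Γ) u‖ * ‖deriv Γ u‖ :=
          mul_le_mul_of_nonneg_right (abs_real_inner_le_norm _ _) (norm_nonneg _)
      _ = ‖N j u‖ * (‖deriv (deriv Γ) u‖ * ‖deriv Γ u‖) := by ring
      _ ≤ C * K := mul_le_mul (hC u h2) (h1 h2) (by positivity)
          ((norm_nonneg _).trans (hC u h2))
  have hwint : ∀ (j : Fin n) (x y : ℝ), x ∈ I → y ∈ I → IntervalIntegrable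
      (fun u => (inner ℝ (N j u) (deriv (deriv Γ) u) : ℝ) • deriv Γ u) volume x y := by
    intro j x y hx hy
    have h1 : IntegrableOn (fun u => (inner ℝ (N j u) (deriv (deriv Γ) u) : ℝ) • deriv Γ u)
        (Icc (min x y) (max x y)) volume := hwOn j _ _ (hmmI x hx y hy)
    have h2 : Ι x y ⊆ Icc (min x y) (max x y) := by
      rw [uIoc_eq_union]
      rintro u (hu | hu)
      · exact ⟨(min_le_left x y).trans hu.1.le, hu.2.trans (le_max_right x y)⟩
      · exact ⟨(min_le_right x y).trans hu.1.le, hu.2.trans (le_max_left x y)⟩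
    exact intervalIntegrable_iff.2 (h1.mono_set h2)
  -- increments
  have hinc : ∀ (j : Fin n) (x y : ℝ), x ∈ I → y ∈ I →
      N j y - N j x = ∫ u in x..y,
        (-(inner ℝ (N j u) (deriv (deriv Γ) u) : ℝ)) • deriv Γ u := by
    intro j x y hx hy
    have hadd := intervalIntegral.integral_add_adjacent_intervals
      (hwint j s₀ x hs₀ hx) (hwint j x y hx hy)
    have h3 : ∫ u in x..y, (-(inner ℝ (N j u) (deriv (deriv Γ) u) : ℝ)) • deriv Γ u
        = -∫ u in x..y, (inner ℝ (N j u) (deriv (deriv Γ) u) : ℝ) • deriv Γ u := by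
      rw [← intervalIntegral.integral_neg]
      refine intervalIntegral.integral_congr ?_
      intro u _
      simp only [neg_smul]
    rw [hNeq j y hy, hNeq j x hx, sub_sub_sub_cancel_left, ← hadd, h3]
    abel
  -- local Lipschitz property on closed intervals
  have hNlip : ∀ (j : Fin n), ∀ s ∈ I, ∃ ε > 0, Icc (s - ε) (s + ε) ⊆ I ∧
      ∃ L : NNReal, LipschitzOnWith L (N j) (Icc (s - ε) (s + ε)) := by
    intro j s hs
    obtain ⟨ε, hε, hsub⟩ := hball s hs
    obtain ⟨K, hK0, hKb⟩ := hKcc (s - ε) (s + ε) hsub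
    obtain ⟨C, hC⟩ := isCompact_Icc.exists_bound_of_continuousOn ((hNcont j).mono hsub)
    have hC0 : 0 ≤ C := (norm_nonneg _).trans (hC s ⟨by linarith, by linarith⟩)
    refine ⟨ε, hε, hsub, Real.toNNReal (C * K), LipschitzOnWith.of_dist_le_mul ?_⟩
    intro x hx y hy
    rw [dist_eq_norm, Real.coe_toNNReal _ (by positivity), Real.dist_eq]
    have h1 : N j x - N j y = ∫ u in y..x,
        (-(inner ℝ (N j u) (deriv (deriv Γ) u) : ℝ)) • deriv Γ u :=
      hinc j y x (hsub hy) (hsub hx)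
    rw [h1]
    have hbd : ∀ᵐ u ∂(volume.restrict (Ι y x)),
        ‖(-(inner ℝ (N j u) (deriv (deriv Γ) u) : ℝ)) • deriv Γ u‖ ≤ C * K := by
      filter_upwards [ae_restrict_of_ae hKb, self_mem_ae_restrict measurableSet_uIoc]
        with u h2 h3
      have hu : u ∈ Icc (s - ε) (s + ε) := (uIoc_subset_uIcc.trans (uIcc_subset_Icc hy hx)) h3
      rw [norm_smul, Real.norm_eq_abs, abs_neg]
      calc |(inner ℝ (N j u) (deriv (deriv Γ) u) : ℝ)| * ‖deriv Γ u‖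
          ≤ ‖N j u‖ * ‖deriv (deriv Γ) u‖ * ‖deriv Γ u‖ :=
            mul_le_mul_of_nonneg_right (abs_real_inner_le_norm _ _) (norm_nonneg _)
        _ = ‖N j u‖ * (‖deriv (deriv Γ) u‖ * ‖deriv Γ u‖) := by ring
        _ ≤ C * K := mul_le_mul (hC u hu) (h2 hu) (by positivity) hC0
    refine (intervalIntegral.norm_integral_le_abs_of_norm_le hbd
      (intervalIntegrable_const)).trans ?_
    rw [intervalIntegral.integral_const, smul_eq_mul, abs_mul,
      abs_of_nonneg (by positivity : (0:ℝ) ≤ C * K), abs_sub_comm]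
    exact le_of_eq (mul_comm _ _)
  -- a.e. derivative of the normal fields
  have hNderiv : ∀ᵐ x, x ∈ I → ∀ j : Fin n, HasDerivAt (N j)
      ((-(inner ℝ (N j x) (deriv (deriv Γ) x) : ℝ)) • deriv Γ x) x := by
    have hper : ∀ j : Fin n, ∀ᵐ x, x ∈ I → HasDerivAt (N j)
        ((-(inner ℝ (N j x) (deriv (deriv Γ) x) : ℝ)) • deriv Γ x) x := by
      intro j
      set S : Set (ℚ × ℚ) := {pq | ((pq.1 : ℝ) < (pq.2 : ℝ)) ∧ Icc (pq.1 : ℝ) (pq.2 : ℝ) ⊆ I}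
        with hSdef
      have hScount : S.Countable := S.to_countable
      have hpiece : ∀ pq ∈ S, ∀ᵐ x, x ∈ Ioo ((pq.1 : ℚ) : ℝ) ((pq.2 : ℚ) : ℝ) →
          HasDerivAt (N j)
          ((-(inner ℝ (N j x) (deriv (deriv Γ) x) : ℝ)) • deriv Γ x) x := by
        rintro ⟨p, q⟩ ⟨hpq, hsub⟩
        have hwIcc : IntegrableOn
            (fun u => (-(inner ℝ (N j u) (deriv (deriv Γ) u) : ℝ)) • deriv Γ u)
            (Icc (p : ℝ) (q : ℝ)) volume := by
          have heqf : (fun u => (-(inner ℝ (N j u) (deriv (deriv Γ) u) : ℝ)) • deriv Γ u)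
              = fun u => -((inner ℝ (N j u) (deriv (deriv Γ) u) : ℝ) • deriv Γ u) := by
            funext u
            rw [neg_smul]
          rw [heqf]
          exact (hwOn j (p : ℝ) (q : ℝ) hsub).neg
        have hfind : Integrable ((Icc (p : ℝ) (q : ℝ)).indicator
            (fun u => (-(inner ℝ (N j u) (deriv (deriv Γ) u) : ℝ)) • deriv Γ u)) volume :=
          hwIcc.integrable_indicator measurableSet_Icc
        have hbes := (Besicovitch.vitaliFamily (volume : Measure ℝ)).ae_tendsto_average_norm_sub
          hfind.locallyIntegrable
        filter_upwards [hbes] with x hx hxIoo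
        have hxI : x ∈ I := hsub (Ioo_subset_Icc_self hxIoo)
        have havg := hx.comp (Besicovitch.tendsto_filterAt volume x)
        have hloc : ∀ᶠ y in nhds x, N j y - N j x = ∫ u in x..y,
            (Icc (p : ℝ) (q : ℝ)).indicator
              (fun u => (-(inner ℝ (N j u) (deriv (deriv Γ) u) : ℝ)) • deriv Γ u) u := by
          filter_upwards [isOpen_Ioo.mem_nhds hxIoo] with y hy
          rw [hinc j x y hxI (hsub (Ioo_subset_Icc_self hy))]
          refine intervalIntegral.integral_congr ?_
          intro u hu
          have hu2 : u ∈ Icc (p : ℝ) (q : ℝ) :=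
            (uIcc_subset_Icc (Ioo_subset_Icc_self hxIoo) (Ioo_subset_Icc_self hy)) hu
          simp only [indicator_of_mem hu2]
        have hd := RPF.hasDerivAt_of_integral_increment hfind hloc havg
        have hval : (Icc (p : ℝ) (q : ℝ)).indicator
            (fun u => (-(inner ℝ (N j u) (deriv (deriv Γ) u) : ℝ)) • deriv Γ u) x
            = (-(inner ℝ (N j x) (deriv (deriv Γ) x) : ℝ)) • deriv Γ x :=
          indicator_of_mem (Ioo_subset_Icc_self hxIoo) _
        rwa [hval] at hd
      have hall := (ae_ball_iff hScount).2 hpiece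
      filter_upwards [hall] with x hx hxI
      obtain ⟨ε, hε, hsub⟩ := hball x hxI
      obtain ⟨p, hp1, hp2⟩ := exists_rat_btwn (show x - ε < x by linarith)
      obtain ⟨q, hq1, hq2⟩ := exists_rat_btwn (show x < x + ε by linarith)
      have hpqS : (p, q) ∈ S := by
        refine ⟨hp2.trans hq1, fun u hu => hsub ⟨?_, ?_⟩⟩
        · exact le_trans (le_of_lt hp1) hu.1
        · exact le_trans hu.2 (le_of_lt hq2)
      exact hx (p, q) hpqS ⟨hp2, hq1⟩
    filter_upwards [ae_all_iff.2 hper] with x hx hxI j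
    exact hx j hxI
  -- tangential components vanish
  have hgj : ∀ (j : Fin n), ∀ x ∈ I, (inner ℝ (deriv Γ x) (N j x) : ℝ) = 0 := by
    intro j
    have hconst : ∀ x ∈ I, ∀ y ∈ I,
        (inner ℝ (deriv Γ x) (N j x) : ℝ) = (inner ℝ (deriv Γ y) (N j y) : ℝ) := by
      refine RPF.const_on_of_loclip hIopen hIconn ?_ ?_
      · intro x hx
        obtain ⟨ε1, hε1, hsub1, L1, hL1⟩ : ∃ ε > 0, Icc (x - ε) (x + ε) ⊆ I ∧
            ∃ L : NNReal, LipschitzOnWith L (deriv Γ) (Icc (x - ε) (x + ε)) :=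
          ⟨εf x, hεf x hx, hsubf x hx, Lf x, hLipf x hx⟩
        obtain ⟨ε2, hε2, hsub2, L2, hL2⟩ := hNlip j x hx
        have hε : (0:ℝ) < min ε1 ε2 := lt_min hε1 hε2
        have hs1 : Icc (x - min ε1 ε2) (x + min ε1 ε2) ⊆ Icc (x - ε1) (x + ε1) :=
          Icc_subset_Icc (by linarith [min_le_left ε1 ε2]) (by linarith [min_le_left ε1 ε2])
        have hs2 : Icc (x - min ε1 ε2) (x + min ε1 ε2) ⊆ Icc (x - ε2) (x + ε2) :=
          Icc_subset_Icc (by linarith [min_le_right ε1 ε2]) (by linarith [min_le_right ε1 ε2])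
        have hsI : Icc (x - min ε1 ε2) (x + min ε1 ε2) ⊆ I := hs2.trans hsub2
        have hA : ∀ u ∈ Icc (x - min ε1 ε2) (x + min ε1 ε2), ‖deriv Γ u‖ ≤ 1 :=
          fun u hu => le_of_eq (hunit u (hsI hu))
        obtain ⟨C, hC⟩ := isCompact_Icc.exists_bound_of_continuousOn ((hNcont j).mono hsI)
        obtain ⟨L, hL⟩ := RPF.lipschitzOnWith_inner (hL1.mono hs1) (hL2.mono hs2) hA hC
        exact ⟨min ε1 ε2, hε, hsI, L, hL⟩
      · filter_upwards [hTd, hNderiv] with x h1 h2 hxI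
        have hT' := h1 hxI
        have hN' := h2 hxI j
        have hder := HasDerivAt.inner ℝ hT' hN'
        have e1 : (inner ℝ (deriv Γ x) (deriv Γ x) : ℝ) = 1 := by
          rw [real_inner_self_eq_norm_sq, hunit x hxI, one_pow]
        have e2 : (inner ℝ (deriv (deriv Γ) x) (N j x) : ℝ)
            = (inner ℝ (N j x) (deriv (deriv Γ) x) : ℝ) := real_inner_comm _ _
        have hval : (inner ℝ (deriv Γ x)
            ((-(inner ℝ (N j x) (deriv (deriv Γ) x) : ℝ)) • deriv Γ x) : ℝ)
            + inner ℝ (deriv (deriv Γ) x) (N j x) = 0 := by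
          rw [real_inner_smul_right, e1, e2]
          ring
        rwa [hval] at hder
    intro x hx
    rw [hconst x hx s₀ hs₀, hNs₀]
    have h2 := hON0.2 (Ne.symm (Fin.succ_ne_zero j))
    simpa using h2
  -- Gram matrix is constant
  have hgjk : ∀ (j k : Fin n), ∀ x ∈ I,
      (inner ℝ (N j x) (N k x) : ℝ) = if j = k then 1 else 0 := by
    intro j k
    have hconst : ∀ x ∈ I, ∀ y ∈ I,
        (inner ℝ (N j x) (N k x) : ℝ) = (inner ℝ (N j y) (N k y) : ℝ) := by
      refine RPF.const_on_of_loclip hIopen hIconn ?_ ?_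
      · intro x hx
        obtain ⟨ε1, hε1, hsub1, L1, hL1⟩ := hNlip j x hx
        obtain ⟨ε2, hε2, hsub2, L2, hL2⟩ := hNlip k x hx
        have hε : (0:ℝ) < min ε1 ε2 := lt_min hε1 hε2
        have hs1 : Icc (x - min ε1 ε2) (x + min ε1 ε2) ⊆ Icc (x - ε1) (x + ε1) :=
          Icc_subset_Icc (by linarith [min_le_left ε1 ε2]) (by linarith [min_le_left ε1 ε2])
        have hs2 : Icc (x - min ε1 ε2) (x + min ε1 ε2) ⊆ Icc (x - ε2) (x + ε2) :=
          Icc_subset_Icc (by linarith [min_le_right ε1 ε2]) (by linarith [min_le_right ε1 ε2])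
        have hsI : Icc (x - min ε1 ε2) (x + min ε1 ε2) ⊆ I := hs2.trans hsub2
        obtain ⟨C1, hC1⟩ := isCompact_Icc.exists_bound_of_continuousOn ((hNcont j).mono hsI)
        obtain ⟨C2, hC2⟩ := isCompact_Icc.exists_bound_of_continuousOn ((hNcont k).mono hsI)
        obtain ⟨L, hL⟩ := RPF.lipschitzOnWith_inner (hL1.mono hs1) (hL2.mono hs2) hC1 hC2
        exact ⟨min ε1 ε2, hε, hsI, L, hL⟩
      · filter_upwards [hNderiv] with x h2 hxI
        have hN'j := h2 hxI j
        have hN'k := h2 hxI k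
        have hder := HasDerivAt.inner ℝ hN'j hN'k
        have e1 : (inner ℝ (N j x) (deriv Γ x) : ℝ) = 0 := by
          rw [real_inner_comm]; exact hgj j x hxI
        have e2 : (inner ℝ (deriv Γ x) (N k x) : ℝ) = 0 := hgj k x hxI
        have hval : (inner ℝ (N j x)
            ((-(inner ℝ (N k x) (deriv (deriv Γ) x) : ℝ)) • deriv Γ x) : ℝ)
            + inner ℝ ((-(inner ℝ (N j x) (deriv (deriv Γ) x) : ℝ)) • deriv Γ x) (N k x) = 0 := by
          rw [real_inner_smul_right, real_inner_smul_left, e1, e2]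
          ring
        rwa [hval] at hder
    intro x hx
    rw [hconst x hx s₀ hs₀, hNs₀ j, hNs₀ k]
    by_cases hjk : j = k
    · subst hjk
      rw [if_pos rfl]
      have h1 := hON0.1 j.succ
      rw [Fin.cons_succ] at h1
      rw [real_inner_self_eq_norm_sq, h1, one_pow]
    · rw [if_neg hjk]
      have h2 := hON0.2 (show j.succ ≠ k.succ from fun h => hjk (Fin.succ_inj.1 h))
      simpa using h2
  -- orthonormality of the frame
  have hON : ∀ s ∈ I, Orthonormal ℝ
      (Fin.cons (deriv Γ s) (fun j => N j s) : Fin (n + 1) → EuclideanSpace ℝ (Fin (n + 1))) := by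
    intro s hs
    rw [orthonormal_iff_ite]
    intro i k
    refine Fin.cases ?_ (fun i' => ?_) i
    · refine Fin.cases ?_ (fun k' => ?_) k
      · rw [if_pos rfl]
        simp only [Fin.cons_zero]
        rw [real_inner_self_eq_norm_sq, hunit s hs, one_pow]
      · rw [if_neg (Ne.symm (Fin.succ_ne_zero k'))]
        simp only [Fin.cons_zero, Fin.cons_succ]
        exact hgj k' s hs
    · refine Fin.cases ?_ (fun k' => ?_) k
      · rw [if_neg (Fin.succ_ne_zero i')]
        simp only [Fin.cons_zero, Fin.cons_succ]
        rw [real_inner_comm]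
        exact hgj i' s hs
      · simp only [Fin.cons_succ]
        rw [hgjk i' k' s hs]
        by_cases h : i' = k'
        · subst h; rw [if_pos rfl, if_pos rfl]
        · rw [if_neg h, if_neg (fun hc => h (Fin.succ_inj.1 hc))]
  refine ⟨N, ⟨hNs₀, ?_, hON, ?_⟩, ?_⟩
  · -- local Lipschitz output
    intro j s hs
    obtain ⟨ε, hε, hsub, L, hL⟩ := hNlip j s hs
    exact ⟨ε, hε, L, hL.mono Ioo_subset_Icc_self⟩
  · -- a.e. derivative output
    rw [ae_restrict_iff' hIopen.measurableSet]
    filter_upwards [hNderiv] with x h1 hxI j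
    exact ⟨-(inner ℝ (N j x) (deriv (deriv Γ) x) : ℝ), h1 hxI j⟩
  · -- uniqueness
    rintro M ⟨hM0, hMlip, hMON, hMae⟩ j s hs
    have hMT : ∀ x ∈ I, (inner ℝ (deriv Γ x) (M j x) : ℝ) = 0 := by
      intro x hx
      have h2 := (hMON x hx).2 (Ne.symm (Fin.succ_ne_zero j))
      simpa using h2
    have hMae' := (ae_restrict_iff' hIopen.measurableSet).1 hMae
    have hφ : ∀ x ∈ I, ∀ y ∈ I, (inner ℝ (M j x - N j x) (M j x - N j x) : ℝ)
        = (inner ℝ (M j y - N j y) (M j y - N j y) : ℝ) := by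
      refine RPF.const_on_of_loclip hIopen hIconn ?_ ?_
      · intro x hx
        obtain ⟨ε1, hε1, L1, hL1⟩ := hMlip j x hx
        obtain ⟨ε2, hε2, hsub2, L2, hL2⟩ := hNlip j x hx
        obtain ⟨ε3, hε3, hsub3⟩ := hball x hx
        set ε := min (min (ε1 / 2) ε2) ε3 with hεdef
        have hε : (0:ℝ) < ε := lt_min (lt_min (by positivity) hε2) hε3
        have hεle1 : ε ≤ ε1 / 2 := (min_le_left _ _).trans (min_le_left _ _)
        have hεle2 : ε ≤ ε2 := (min_le_left _ _).trans (min_le_right _ _)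
        have hεle3 : ε ≤ ε3 := min_le_right _ _
        have hs1 : Icc (x - ε) (x + ε) ⊆ Ioo (x - ε1) (x + ε1) := by
          intro u hu
          constructor
          · have := hu.1; linarith
          · have := hu.2; linarith
        have hs2 : Icc (x - ε) (x + ε) ⊆ Icc (x - ε2) (x + ε2) :=
          Icc_subset_Icc (by linarith) (by linarith)
        have hsI : Icc (x - ε) (x + ε) ⊆ I :=
          (Icc_subset_Icc (by linarith) (by linarith)).trans hsub3
        have hdlip := (hL1.mono hs1).sub (hL2.mono hs2)
        obtain ⟨C, hC⟩ := isCompact_Icc.exists_bound_of_continuousOn hdlip.continuousOn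
        obtain ⟨L, hL⟩ := RPF.lipschitzOnWith_inner hdlip hdlip hC hC
        exact ⟨ε, hε, hsI, L, hL⟩
      · filter_upwards [hMae', hNderiv] with x h1 h2 hxI
        obtain ⟨cM, hcM⟩ := h1 hxI j
        have hcN := h2 hxI j
        have hdiff := hcM.sub hcN
        have hder := HasDerivAt.inner ℝ hdiff hdiff
        have hMT0 : (inner ℝ (deriv Γ x) (M j x) : ℝ) = 0 := hMT x hxI
        have hNT0 : (inner ℝ (deriv Γ x) (N j x) : ℝ) = 0 := hgj j x hxI
        have hsub1 : (inner ℝ (M j x - N j x) (deriv Γ x) : ℝ) = 0 := by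
          have e1 : (inner ℝ (M j x) (deriv Γ x) : ℝ) = 0 := by
            rw [real_inner_comm]; exact hMT0
          have e2 : (inner ℝ (N j x) (deriv Γ x) : ℝ) = 0 := by
            rw [real_inner_comm]; exact hNT0
          rw [inner_sub_left, e1, e2]
          ring
        have hsub2 : (inner ℝ (deriv Γ x) (M j x - N j x) : ℝ) = 0 := by
          rw [inner_sub_right, hMT0, hNT0]
          ring
        have hval : (inner ℝ (M j x - N j x) (cM • deriv Γ x -
            (-(inner ℝ (N j x) (deriv (deriv Γ) x) : ℝ)) • deriv Γ x) : ℝ)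
            + inner ℝ (cM • deriv Γ x -
              (-(inner ℝ (N j x) (deriv (deriv Γ) x) : ℝ)) • deriv Γ x) (M j x - N j x) = 0 := by
          rw [← sub_smul, real_inner_smul_right, real_inner_smul_left, hsub1, hsub2]
          ring
        simp only [Pi.sub_apply] at hder; rwa [hval] at hder
    have h6 := hφ s hs s₀ hs₀
    rw [hM0 j, hNs₀ j, sub_self, inner_zero_left] at h6
    exact sub_eq_zero.1 (inner_self_eq_zero.1 h6)

end
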